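/- Let S be a monoid with zero 0_S and identity 1_S, λ a nonempty set, and σ an automorphism of the Brandt λ⁰-extension B⁰_λ(S). Then for every α ∈ λ there exists α' ∈ λ such that σ(α, 1_S, α) = (α', 1_S, α'). -/

import Mathlib

/-- The Brandt λ⁰-extension `B⁰_Λ(S)` of a semigroup `S` with zero: its underlying
set is `(Λ × (S \ {0_S}) × Λ) ∪ {0}`, where `none` plays the role of the zero `0`. -/
def Brandt (Λ S : Type*) [Zero S] : Type _ :=
  Option (Λ × {s : S // s ≠ 0} × Λ)

namespace Brandt

variable {Λ S : Type*}

instance [Zero S] : Zero (Brandt Λ S) := ⟨none⟩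

open Classical in
/-- `(α, a, β)·(γ, b, δ) = (α, ab, δ)` if `β = γ` and `ab ≠ 0_S`, and `0` otherwise;
`0` is a two-sided zero. -/
noncomputable instance [Zero S] [Mul S] : Mul (Brandt Λ S) :=
  ⟨fun x y =>
    match x, y with
    | some (α, a, β), some (γ, b, δ) =>
        if h : β = γ ∧ a.1 * b.1 ≠ 0 then some (α, ⟨a.1 * b.1, h.2⟩, δ) else 0
    | _, _ => 0⟩

open Classical in
/-- `Brandt.mk α s β` is the element `(α, s, β)` of `B⁰_Λ(S)` if `s ≠ 0`, and `0` otherwise. -/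
noncomputable def mk [Zero S] (α : Λ) (s : S) (β : Λ) : Brandt Λ S :=
  if h : s ≠ 0 then some (α, ⟨s, h⟩, β) else 0

end Brandt

/-- An automorphism of a semigroup: a bijective map preserving the multiplication. -/
def IsSemigroupAut {T : Type*} [Mul T] (σ : T → T) : Prop :=
  Function.Bijective σ ∧ ∀ x y : T, σ (x * y) = σ x * σ y

section Aux

set_option linter.unusedSectionVars false

variable {Λ S : Type*} [Zero S] [Mul S]

/-- Inclusion of a triple into the Brandt extension. -/
def Brandt.el (p : Λ × {s : S // s ≠ 0} × Λ) : Brandt Λ S := some p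

open Classical in
lemma Brandt.el_mul_el (α γ : Λ) (a b : {s : S // s ≠ 0}) (β δ : Λ) :
    (Brandt.el (α, a, β) * Brandt.el (γ, b, δ) : Brandt Λ S) =
      if h : β = γ ∧ a.1 * b.1 ≠ 0 then Brandt.el (α, ⟨a.1 * b.1, h.2⟩, δ) else 0 := by
  by_cases h : β = γ ∧ a.1 * b.1 ≠ 0
  · rw [dif_pos h]; exact dif_pos h
  · rw [dif_neg h]; exact dif_neg h

lemma Brandt.el_ne_zero (p : Λ × {s : S // s ≠ 0} × Λ) : (Brandt.el p : Brandt Λ S) ≠ 0 :=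
  Option.some_ne_none p

lemma Brandt.el_inj {p q : Λ × {s : S // s ≠ 0} × Λ}
    (h : (Brandt.el p : Brandt Λ S) = Brandt.el q) : p = q := Option.some.inj h

lemma Brandt.mul_zero' (x : Brandt Λ S) : x * (0 : Brandt Λ S) = 0 := by
  cases x <;> rfl

lemma Brandt.zero_mul' (x : Brandt Λ S) : (0 : Brandt Λ S) * x = 0 := by
  cases x <;> rfl

lemma Brandt.zero_or_el (x : Brandt Λ S) : x = 0 ∨ ∃ p, x = Brandt.el p := by
  cases x with
  | none => exact Or.inl rfl
  | some p => exact Or.inr ⟨p, rfl⟩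

lemma Brandt.mk_eq_el (α β : Λ) (s : S) (hs : s ≠ 0) :
    (Brandt.mk α s β : Brandt Λ S) = Brandt.el (α, ⟨s, hs⟩, β) := by
  exact dif_pos hs

end Aux

/-- Let `S` be a monoid with zero `0_S` and identity `1_S`, `Λ` a nonempty set, and
`σ` an automorphism of the Brandt λ⁰-extension `B⁰_Λ(S)`. Then for every `α ∈ Λ`
there exists `α' ∈ Λ` such that `σ(α, 1_S, α) = (α', 1_S, α')`. -/
theorem stmt_12 {Λ S : Type*} [Nonempty Λ] [MonoidWithZero S]
    (σ : Brandt Λ S → Brandt Λ S) (hσ : IsSemigroupAut σ) (α : Λ) :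
    ∃ α' : Λ, σ (Brandt.mk α (1 : S) α) = Brandt.mk α' (1 : S) α' := by
  obtain ⟨⟨hinj, hsurj⟩, hmul⟩ := hσ
  -- σ(0) = 0
  have hzero : σ (0 : Brandt Λ S) = 0 := by
    obtain ⟨x, hx⟩ := hsurj (0 : Brandt Λ S)
    have h1 : σ ((0 : Brandt Λ S) * x) = σ 0 * σ x := hmul 0 x
    rw [Brandt.zero_mul', hx, Brandt.mul_zero'] at h1
    exact h1
  by_cases hone : (1 : S) = 0
  · refine ⟨α, ?_⟩
    have h0 : Brandt.mk α (1 : S) α = (0 : Brandt Λ S) := by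
      exact dif_neg (not_not.mpr hone)
    rw [h0, hzero]
  · -- main case : 1 ≠ 0 in S
    set e : Brandt Λ S := Brandt.mk α (1 : S) α with he
    have hesome : e = Brandt.el (α, ⟨(1 : S), hone⟩, α) := Brandt.mk_eq_el α α 1 hone
    -- e is idempotent
    have hee : e * e = e := by
      rw [hesome, Brandt.el_mul_el, dif_pos ⟨rfl, by simpa using hone⟩]
      simp
    have hσe : σ e = σ e * σ e := by rw [← hmul, hee]
    -- σ e ≠ 0
    have hσe0 : σ e ≠ 0 := fun h => by
      have : e = 0 := hinj (h.trans hzero.symm)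
      exact Brandt.el_ne_zero _ (hesome ▸ this)
    obtain ⟨p, hp⟩ : ∃ p, σ e = Brandt.el p :=
      (Brandt.zero_or_el (σ e)).resolve_left hσe0
    obtain ⟨α', a, β'⟩ := p
    -- from σe * σe = σe ≠ 0, deduce β' = α'
    have hβα : β' = α' := by
      rw [hp, Brandt.el_mul_el] at hσe
      by_cases h : β' = α' ∧ a.1 * a.1 ≠ 0
      · exact h.1
      · rw [dif_neg h] at hσe
        exact absurd hσe (Brandt.el_ne_zero _)
    subst hβα
    -- g = (β', 1, β')
    set g : Brandt Λ S := Brandt.mk β' (1 : S) β' with hg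
    have hgsome : g = Brandt.el (β', ⟨(1 : S), hone⟩, β') := Brandt.mk_eq_el β' β' 1 hone
    -- σe * g = σe
    have hσeg : σ e * g = σ e := by
      rw [hp, hgsome, Brandt.el_mul_el, dif_pos ⟨rfl, by simpa using a.2⟩]
      congr 2
      simp
    -- take a preimage x of g
    obtain ⟨x, hx⟩ := hsurj g
    have hex : e * x = e := hinj (by rw [hmul, hx, hσeg])
    refine ⟨β', ?_⟩
    suffices hxe : x = e by rw [← hxe, hx, hg]
    -- analyze x
    rcases Brandt.zero_or_el x with hx0 | ⟨⟨γ, b, δ⟩, hxq⟩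
    · rw [hx0, Brandt.mul_zero'] at hex
      exact absurd (hesome ▸ hex.symm) (Brandt.el_ne_zero _)
    · rw [hxq, hesome, Brandt.el_mul_el] at hex
      by_cases hc : α = γ ∧ (1 : S) * b.1 ≠ 0
      · rw [dif_pos hc] at hex
        have h1 := Brandt.el_inj hex
        have hδ : δ = α := congrArg (fun q => q.2.2) h1
        have hb : (1 : S) * b.1 = 1 := congrArg (fun q => q.2.1.1) h1
        obtain ⟨hαγ, -⟩ := hc
        have hb1 : b.1 = 1 := by simpa using hb
        rw [hxq, hesome]
        congr 1
        exact Prod.ext hαγ.symm (Prod.ext (Subtype.ext hb1) hδ)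
      · rw [dif_neg hc] at hex
        exact absurd hex.symm (Brandt.el_ne_zero _)
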